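/- For the simple symmetric random walk and tau_1 = inf{n >= 1 : S_n = 1}, the number of non-negative steps N_{0+}(tau_1) = #{1 <= j <= tau_1 : S_j >= 0} has probability generating function E[z^{N_{0+}(tau_1)}] = z/(2 - z) for |z| <= 1; equivalently N_{0+}(tau_1) has the geometric distribution P(N_{0+}(tau_1) = k) = 2^{-k} for k >= 1. -/

import Mathlib

open scoped Classical

namespace SSRWAux

def pmz (b : Bool) : ℤ := if b then 1 else -1

noncomputable def pmr (b : Bool) : ℝ := if b then 1 else -1

lemma pmr_eq (b : Bool) : pmr b = ((pmz b : ℤ) : ℝ) := by cases b <;> simp [pmr, pmz]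

lemma pmz_le_one (b : Bool) : pmz b ≤ 1 := by cases b <;> simp [pmz]

def ps (l : List Bool) (j : ℕ) : ℤ := ∑ i ∈ Finset.range j, pmz (l.getD i true)

def FP (l : List Bool) : Prop := ps l l.length = 1 ∧ ∀ j < l.length, ps l j ≤ 0

noncomputable def cnt (l : List Bool) : ℕ :=
  ((Finset.Icc 1 l.length).filter (fun j => 0 ≤ ps l j)).card

@[simp] lemma ps_zero (l : List Bool) : ps l 0 = 0 := by simp [ps]

lemma ps_succ (l : List Bool) (j : ℕ) :
    ps l (j + 1) = ps l j + pmz (l.getD j true) := Finset.sum_range_succ _ _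

lemma ps_cons (b : Bool) (t : List Bool) (j : ℕ) :
    ps (b :: t) (j + 1) = pmz b + ps t j := by
  rw [ps, Finset.sum_range_succ']
  simp [ps, add_comm]

lemma ps_congr {l l' : List Bool} {j : ℕ}
    (h : ∀ i < j, l.getD i true = l'.getD i true) : ps l j = ps l' j := by
  unfold ps
  exact Finset.sum_congr rfl fun i hi => by rw [h i (Finset.mem_range.mp hi)]

lemma ps_append_le (m l' : List Bool) {j : ℕ} (h : j ≤ m.length) :
    ps (m ++ l') j = ps m j := by
  refine ps_congr fun i hi => ?_
  have hi' : i < m.length := lt_of_lt_of_le hi h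
  rw [List.getD_eq_getElem?_getD, List.getD_eq_getElem?_getD,
    List.getElem?_append_left hi']

lemma ps_append_add (m l' : List Bool) (j : ℕ) :
    ps (m ++ l') (m.length + j) = ps m m.length + ps l' j := by
  unfold ps
  rw [Finset.sum_range_add]
  congr 1
  · exact Finset.sum_congr rfl fun i hi => by
      rw [List.getD_eq_getElem?_getD, List.getD_eq_getElem?_getD,
        List.getElem?_append_left (Finset.mem_range.mp hi)]
  · exact Finset.sum_congr rfl fun i _ => by
      rw [List.getD_eq_getElem?_getD, List.getD_eq_getElem?_getD,
        List.getElem?_append_right (Nat.le_add_right _ _), Nat.add_sub_cancel_left]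

lemma FP_true : FP [true] := by
  constructor
  · simp [ps, pmz]
  · intro j hj
    have : j = 0 := Nat.lt_one_iff.mp (by simpa using hj)
    subst this; simp

lemma length_pos_of_FP {l : List Bool} (h : FP l) : 0 < l.length := by
  rcases Nat.eq_zero_or_pos l.length with h0 | h1
  · exfalso; have := h.1; rw [h0] at this; simp at this
  · exact h1

lemma cnt_pos {l : List Bool} (h : FP l) : 1 ≤ cnt l := by
  have : l.length ∈ (Finset.Icc 1 l.length).filter (fun j => 0 ≤ ps l j) := by
    refine Finset.mem_filter.mpr ⟨Finset.mem_Icc.mpr ⟨length_pos_of_FP h, le_rfl⟩, ?_⟩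
    rw [h.1]; norm_num
  exact Finset.card_pos.mpr ⟨_, this⟩

lemma cnt_sum (l : List Bool) :
    cnt l = ∑ j ∈ Finset.range l.length, if 0 ≤ ps l (j + 1) then 1 else 0 := by
  rw [cnt, Finset.card_filter, ← Finset.Ico_add_one_right_eq_Icc, Finset.sum_Ico_eq_sum_range]
  simp [add_comm]

lemma cnt_true : cnt [true] = 1 := by
  have h1 : ps [true] 1 = 1 := by simp [ps, pmz]
  rw [cnt_sum, List.length_singleton, Finset.sum_range_one, if_pos (by rw [h1]; norm_num)]

end SSRWAux

namespace SSRWAux2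
open SSRWAux

lemma FP_cons {m l' : List Bool} (hm : FP m) (hl : FP l') :
    FP (false :: m ++ l') := by
  rw [List.cons_append]
  have hps : ∀ j, ps (false :: (m ++ l')) (j+1) = -1 + ps (m ++ l') j := by
    intro j; rw [ps_cons]; simp [pmz]
  have hlen : (false :: (m ++ l')).length = (m.length + l'.length) + 1 := by simp
  constructor
  · rw [hlen, hps, ps_append_add, hm.1, hl.1]; ring
  · intro j hj
    rw [hlen] at hj
    match j with
    | 0 => simp
    | Nat.succ j' =>
      rw [hps]
      have hj' : j' < m.length + l'.length := by omega
      rcases Nat.lt_or_ge j' m.length with hc | hc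
      · rw [ps_append_le _ _ (le_of_lt hc)]
        have := hm.2 j' hc
        omega
      · rcases Nat.eq_or_lt_of_le hc with h2 | h2
        · rw [ps_append_le _ _ (le_of_eq h2.symm)]
          have : ps m j' = 1 := by rw [← h2]; exact hm.1
          omega
        · have hi1 : 1 ≤ j' - m.length := by omega
          have hi2 : j' - m.length < l'.length := by omega
          have he : j' = m.length + (j' - m.length) := by omega
          rw [he, ps_append_add, hm.1]
          have := hl.2 _ hi2
          omega

lemma cnt_cons {m l' : List Bool} (hm : FP m) (hl : FP l') :
    cnt (false :: m ++ l') = cnt l' + 1 := by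
  rw [List.cons_append]
  have hps : ∀ j, ps (false :: (m ++ l')) (j+1) = -1 + ps (m ++ l') j := by
    intro j; rw [ps_cons]; simp [pmz]
  rw [cnt_sum]
  have hlen : (false :: (m ++ l')).length = m.length + (l'.length + 1) := by
    simp; ring
  rw [hlen, Finset.sum_range_add]
  have h1 : (∑ j ∈ Finset.range m.length,
      if 0 ≤ ps (false :: (m ++ l')) (j+1) then 1 else 0) = 0 := by
    refine Finset.sum_eq_zero fun j hj => ?_
    have hj' := Finset.mem_range.mp hj
    rw [hps, ps_append_le _ _ (le_of_lt hj')]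
    have := hm.2 j hj'
    rw [if_neg (by omega)]
  have h2 : ∀ i ∈ Finset.range (l'.length + 1),
      (if 0 ≤ ps (false :: (m ++ l')) ((m.length + i)+1) then (1:ℕ) else 0)
        = (if 0 ≤ ps l' i then 1 else 0) := by
    intro i _
    rw [hps, ps_append_add, hm.1]
    exact if_congr (by omega) rfl rfl
  rw [h1, Finset.sum_congr rfl h2, Finset.sum_range_succ', ← cnt_sum, ps_zero,
    if_pos le_rfl, zero_add]

lemma FP_decomp {l : List Bool} (h : FP l) (hne : l ≠ [true]) :
    ∃ m l', FP m ∧ FP l' ∧ l = false :: m ++ l' := by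
  classical
  cases l with
  | nil => exact absurd h.1 (by simp)
  | cons b t =>
    cases b with
    | true =>
      exfalso
      cases t with
      | nil => exact hne rfl
      | cons c t' =>
        have h1 : ps (true :: c :: t') 1 ≤ 0 := h.2 1 (by simp)
        have h2 : ps (true :: c :: t') 1 = 1 := by
          rw [show (1:ℕ) = 0 + 1 from rfl, ps_cons]; simp [pmz]
        omega
    | false =>
      have htl : t.length + 1 = (false :: t).length := by simp
      have hlen2 : 2 ≤ (false :: t).length := by
        cases t with
        | nil =>
          exfalso
          have := h.1
          simp [ps, pmz] at this
        | cons c t' => simp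
      have hex : ∃ j, 2 ≤ j ∧ 0 ≤ ps (false :: t) j :=
        ⟨(false :: t).length, hlen2, by rw [h.1]; norm_num⟩
      set n := Nat.find hex with hn
      have hQn : 2 ≤ n ∧ 0 ≤ ps (false :: t) n := Nat.find_spec hex
      have hmin : ∀ j, j < n → ¬(2 ≤ j ∧ 0 ≤ ps (false :: t) j) :=
        fun j hj => Nat.find_min hex hj
      have hn2 : 2 ≤ n := hQn.1
      have hnlen : n ≤ (false :: t).length :=
        Nat.find_le ⟨hlen2, by rw [h.1]; norm_num⟩
      have ht : ∀ j, ps (false :: t) (j+1) = -1 + ps t j := by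
        intro j; rw [ps_cons]; simp [pmz]
      have hps1 : ps (false :: t) 1 = -1 := by
        rw [show (1:ℕ) = 0 + 1 from rfl, ht]; simp
      have hneg : ∀ j, 1 ≤ j → j < n → ps (false :: t) j ≤ -1 := by
        intro j h1 h2
        rcases Nat.lt_or_ge j 2 with hj2 | hj2
        · have : j = 1 := by omega
          rw [this, hps1]
        · have := hmin j h2
          push_neg at this
          have := this hj2
          omega
      have hpsn : ps (false :: t) n = 0 := by
        have he : n = (n-1) + 1 := by omega
        have hstep : ps (false :: t) n
            = ps (false :: t) (n-1) + pmz ((false :: t).getD (n-1) true) := by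
          conv_lhs => rw [he]
          exact ps_succ _ _
        have hb := pmz_le_one ((false :: t).getD (n-1) true)
        have hprev : ps (false :: t) (n-1) ≤ -1 := hneg (n-1) (by omega) (by omega)
        have h0 : 0 ≤ ps (false :: t) n := hQn.2
        omega
      have hnlt : n < (false :: t).length := by
        rcases Nat.eq_or_lt_of_le hnlen with he | hlt
        · exfalso; rw [he, h.1] at hpsn; omega
        · exact hlt
      -- relation between ps t and ps (false :: t)
      have hlm : (t.take (n-1)).length = n - 1 := by
        rw [List.length_take]; omega
      have htake : ∀ j, j ≤ n-1 → ps (t.take (n-1)) j = ps t j := by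
        intro j hj
        refine ps_congr fun i hi => ?_
        rw [List.getD_eq_getElem?_getD, List.getD_eq_getElem?_getD,
          List.getElem?_take]
        simp [show i < n - 1 by omega]
      have key : ∀ j, ps t ((n-1)+j) = ps t (n-1) + ps (t.drop (n-1)) j := by
        intro j
        have h0 := ps_append_add (t.take (n-1)) (t.drop (n-1)) j
        rw [List.take_append_drop, hlm, htake _ le_rfl] at h0
        exact h0
      have hval : ps t (n-1) = 1 := by
        have h1 := ht (n-1)
        have he : (n-1) + 1 = n := by omega
        rw [he] at h1
        omega
      have hld : (t.drop (n-1)).length = (false :: t).length - n := by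
        rw [List.length_drop]; omega
      refine ⟨t.take (n-1), t.drop (n-1), ⟨?_, ?_⟩, ⟨?_, ?_⟩, ?_⟩
      · rw [hlm, htake _ le_rfl, hval]
      · intro j hj
        rw [hlm] at hj
        rw [htake _ (le_of_lt hj)]
        have h1 := hneg (j+1) (by omega) (by omega)
        have h2 := ht j
        omega
      · rw [hld]
        have h1 := key ((false :: t).length - n)
        have he : (n-1) + ((false :: t).length - n) = t.length := by omega
        rw [he, hval] at h1
        have h2 := ht t.length
        have he2 : t.length + 1 = (false :: t).length := by simp
        rw [he2, h.1] at h2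
        omega
      · intro j hj
        rw [hld] at hj
        have h1 := key j
        rw [hval] at h1
        have h2 := ht ((n-1)+j)
        have he : ((n-1)+j) + 1 = n + j := by omega
        rw [he] at h2
        have h3 := h.2 (n+j) (by omega)
        omega
      · rw [List.cons_append, List.take_append_drop]

lemma append_len_not_lt {m l' m₂ l₂ : List Bool} (hm : FP m) (hm₂ : FP m₂)
    (h : m ++ l' = m₂ ++ l₂) : ¬ m.length < m₂.length := by
  intro hlt
  have h1 : ps (m ++ l') m.length = 1 := by rw [ps_append_le _ _ le_rfl, hm.1]
  have h3 := hm₂.2 m.length hlt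
  rw [h, ps_append_le _ _ (le_of_lt hlt)] at h1
  omega

lemma FP_unique {m l' m₂ l₂ : List Bool} (hm : FP m) (hm₂ : FP m₂)
    (h : false :: m ++ l' = false :: m₂ ++ l₂) : m = m₂ ∧ l' = l₂ := by
  have h' : m ++ l' = m₂ ++ l₂ := by
    rw [List.cons_append, List.cons_append] at h
    injection h
  have hle := append_len_not_lt hm hm₂ h'
  have hge := append_len_not_lt hm₂ hm h'.symm
  exact List.append_inj h' (by omega)

lemma eq_singleton_of_cnt_one {l : List Bool} (h : FP l) (hc : cnt l = 1) :
    l = [true] := by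
  by_contra hne
  obtain ⟨m, l', hm, hl, hdec⟩ := FP_decomp h hne
  rw [hdec, cnt_cons hm hl] at hc
  have := cnt_pos hl
  omega

end SSRWAux2

namespace SSRWAux3
open SSRWAux SSRWAux2

noncomputable def w (l : List Bool) : ENNReal := 2⁻¹ ^ l.length

lemma w_ne_zero (l : List Bool) : w l ≠ 0 := by
  simp [w]

lemma w_cons (m l' : List Bool) : w (false :: m ++ l') = 2⁻¹ * w m * w l' := by
  simp [w, pow_add]
  ring

noncomputable def hsum : ENNReal := ∑' l : {l : List Bool // FP l}, w l.1

noncomputable def pk (k : ℕ) : ENNReal :=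
  ∑' l : {l : List Bool // FP l ∧ cnt l = k}, w l.1

lemma ne_singleton (m l' : List Bool) : false :: m ++ l' ≠ [true] := by
  simp

lemma prod_tsum {α : Type*} (v : α → ENNReal) :
    ∑' p : {m : List Bool // FP m} × α, (2⁻¹ * w p.1.1 * v p.2)
      = 2⁻¹ * hsum * ∑' a, v a := by
  rw [ENNReal.tsum_prod']
  calc (∑' (a : {m : List Bool // FP m}) (b : α), 2⁻¹ * w a.1 * v b)
      = ∑' a : {m : List Bool // FP m}, 2⁻¹ * w a.1 * ∑' b, v b := by
        exact tsum_congr fun a => ENNReal.tsum_mul_left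
    _ = 2⁻¹ * hsum * ∑' a, v a := by
        rw [ENNReal.tsum_mul_right, ENNReal.tsum_mul_left]
        rfl

lemma pk_zero : pk 0 = 0 := by
  have he : IsEmpty {l : List Bool // FP l ∧ cnt l = 0} := by
    constructor
    rintro ⟨l, hFP, hc⟩
    have := cnt_pos hFP
    omega
  rw [pk, tsum_eq_sum (s := (∅ : Finset _)) (fun b _ => (he.false b).elim)]
  simp

lemma pk_one : pk 1 = 2⁻¹ := by
  rw [pk, tsum_eq_single (⟨[true], FP_true, cnt_true⟩ :
      {l : List Bool // FP l ∧ cnt l = 1})]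
  · simp [w]
  · intro b hb
    exact absurd (Subtype.ext (eq_singleton_of_cnt_one b.2.1 b.2.2)) hb

lemma pk_succ {k : ℕ} (hk : 1 ≤ k) : pk (k+1) = 2⁻¹ * hsum * pk k := by
  classical
  set g : {m : List Bool // FP m} × {l : List Bool // FP l ∧ cnt l = k} → ENNReal :=
    fun p => 2⁻¹ * w p.1.1 * w p.2.1 with hg
  have hgne : ∀ p, g p ≠ 0 := fun p =>
    mul_ne_zero (mul_ne_zero (by simp) (w_ne_zero _)) (w_ne_zero _)
  have key : (∑' l : {l : List Bool // FP l ∧ cnt l = k+1}, w l.1) = ∑' p, g p := by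
    refine tsum_eq_tsum_of_ne_zero_bij
      (fun p => ⟨false :: p.1.1.1 ++ p.1.2.1,
        FP_cons p.1.1.2 p.1.2.2.1, by rw [cnt_cons p.1.1.2 p.1.2.2.1, p.1.2.2.2]⟩)
      ?_ ?_ ?_
    · rintro ⟨⟨m, l'⟩, _⟩ ⟨⟨m₂, l₂⟩, _⟩ hpq
      have hval : false :: m.1 ++ l'.1 = false :: m₂.1 ++ l₂.1 :=
        congrArg Subtype.val hpq
      obtain ⟨h1, h2⟩ := FP_unique m.2 m₂.2 hval
      apply Subtype.ext
      simp only [Prod.mk.injEq]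
      exact ⟨Subtype.ext h1, Subtype.ext h2⟩
    · rintro ⟨l, hFP, hc⟩ _
      have hne : l ≠ [true] := by
        intro h
        rw [h, cnt_true] at hc
        omega
      obtain ⟨m, l', hm, hl', heq⟩ := FP_decomp hFP hne
      have hc' : cnt l' = k := by
        rw [heq, cnt_cons hm hl'] at hc
        omega
      exact ⟨⟨(⟨m, hm⟩, ⟨l', hl', hc'⟩), hgne _⟩, Subtype.ext heq.symm⟩
    · rintro ⟨⟨m, l'⟩, _⟩
      exact w_cons m.1 l'.1
  rw [pk, key]
  exact prod_tsum (fun b : {l : List Bool // FP l ∧ cnt l = k} => w b.1)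

lemma hsum_eq : hsum = 2⁻¹ + 2⁻¹ * hsum * hsum := by
  classical
  have hsplit : hsum
      = (∑' x : {l : List Bool // FP l}, if x.1 = [true] then w x.1 else 0)
        + (∑' x : {l : List Bool // FP l}, if x.1 = [true] then 0 else w x.1) := by
    rw [← ENNReal.tsum_add]
    exact tsum_congr fun x => by split_ifs <;> simp
  have h1 : (∑' x : {l : List Bool // FP l}, if x.1 = [true] then w x.1 else 0) = 2⁻¹ := by
    rw [tsum_eq_single (⟨[true], FP_true⟩ : {l : List Bool // FP l})]
    · simp [w]
    · intro b hb
      rw [if_neg (fun h => hb (Subtype.ext h))]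
  have h2 : (∑' x : {l : List Bool // FP l}, if x.1 = [true] then 0 else w x.1)
      = 2⁻¹ * hsum * hsum := by
    set g : {m : List Bool // FP m} × {l : List Bool // FP l} → ENNReal :=
      fun p => 2⁻¹ * w p.1.1 * w p.2.1 with hg
    have hgne : ∀ p, g p ≠ 0 := fun p =>
      mul_ne_zero (mul_ne_zero (by simp) (w_ne_zero _)) (w_ne_zero _)
    have key : (∑' x : {l : List Bool // FP l}, if x.1 = [true] then 0 else w x.1)
        = ∑' p, g p := by
      refine tsum_eq_tsum_of_ne_zero_bij
        (fun p => ⟨false :: p.1.1.1 ++ p.1.2.1,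
          FP_cons p.1.1.2 p.1.2.2⟩) ?_ ?_ ?_
      · rintro ⟨⟨m, l'⟩, _⟩ ⟨⟨m₂, l₂⟩, _⟩ hpq
        have hval : false :: m.1 ++ l'.1 = false :: m₂.1 ++ l₂.1 :=
          congrArg Subtype.val hpq
        obtain ⟨ha, hb⟩ := FP_unique m.2 m₂.2 hval
        apply Subtype.ext
        simp only [Prod.mk.injEq]
        exact ⟨Subtype.ext ha, Subtype.ext hb⟩
      · rintro ⟨l, hFP⟩ hx
        have hne : l ≠ [true] := by
          intro h
          apply hx
          simp only [Function.mem_support, ne_eq, not_not]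
          rw [if_pos h]
        obtain ⟨m, l', hm, hl', heq⟩ := FP_decomp hFP hne
        exact ⟨⟨(⟨m, hm⟩, ⟨l', hl'⟩), hgne _⟩, Subtype.ext heq.symm⟩
      · rintro ⟨⟨m, l'⟩, _⟩
        show (if (false :: m.1 ++ l'.1 : List Bool) = [true] then 0
            else w (false :: m.1 ++ l'.1)) = 2⁻¹ * w m.1 * w l'.1
        rw [if_neg (ne_singleton m.1 l'.1)]
        exact w_cons m.1 l'.1
    rw [key]
    exact prod_tsum (fun b : {l : List Bool // FP l} => w b.1)
  conv_lhs => rw [hsplit]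
  rw [h1, h2]

lemma hsum_eq_one (hle : hsum ≤ 1) : hsum = 1 := by
  have heq := hsum_eq
  have hne : hsum ≠ ⊤ := ne_top_of_le_ne_top ENNReal.one_ne_top hle
  have hinv : (2⁻¹ : ENNReal) ≠ ⊤ := by simp
  have hmul : (2⁻¹ : ENNReal) * hsum * hsum ≠ ⊤ :=
    ENNReal.mul_ne_top (ENNReal.mul_ne_top hinv hne) hne
  have h2 : hsum.toReal = 2⁻¹ + 2⁻¹ * hsum.toReal * hsum.toReal := by
    have := congrArg ENNReal.toReal heq
    rw [ENNReal.toReal_add hinv hmul, ENNReal.toReal_mul, ENNReal.toReal_mul] at this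
    simpa using this
  have h3 : hsum.toReal = 1 := by nlinarith [sq_nonneg (hsum.toReal - 1)]
  rw [← ENNReal.ofReal_toReal hne, h3]
  simp

lemma pk_formula (hone : hsum = 1) : ∀ k, 1 ≤ k → pk k = 2⁻¹ ^ k := by
  intro k hk
  induction k with
  | zero => omega
  | succ n ih =>
    rcases Nat.eq_or_lt_of_le hk with h1 | h1
    · rw [← h1, pk_one, pow_one]
    · have hn : 1 ≤ n := by omega
      rw [pk_succ hn, hone, ih hn, pow_succ]
      ring

end SSRWAux3

namespace SSRWAux4
open SSRWAux SSRWAux2 SSRWAux3 MeasureTheory ProbabilityTheory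

variable {Ω : Type*} [MeasurableSpace Ω]

def Cyl (X : ℕ → Ω → ℝ) (l : List Bool) : Set Ω :=
  {ω | ∀ i < l.length, X i ω = pmr (l.getD i true)}

def G (X : ℕ → Ω → ℝ) : Set Ω := {ω | ∀ i, X i ω = 1 ∨ X i ω = -1}

lemma pmr_or (b : Bool) : pmr b = 1 ∨ pmr b = -1 := by cases b <;> simp [pmr]

lemma pmr_inj : Function.Injective pmr := by
  intro a b hab
  cases a <;> cases b <;> simp [pmr] at hab ⊢ <;> norm_num at hab

section meas

variable (P : Measure Ω) [IsProbabilityMeasure P] (X : ℕ → Ω → ℝ)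
  (hmeas : ∀ i, Measurable (X i))
  (hdist : ∀ i, Measure.map (X i) P
      = (1 / 2 : ENNReal) • Measure.dirac (1 : ℝ)
          + (1 / 2 : ENNReal) • Measure.dirac (-1 : ℝ))

include hmeas hdist in
lemma step_prob (i : ℕ) {c : ℝ} (hc : c = 1 ∨ c = -1) :
    P (X i ⁻¹' {c}) = 2⁻¹ := by
  rw [← Measure.map_apply (hmeas i) (measurableSet_singleton c), hdist i]
  rcases hc with h | h <;> subst h <;>
    simp [Measure.dirac_apply' _ (measurableSet_singleton _),
      Set.indicator_of_mem, Set.indicator_of_notMem, Set.mem_singleton_iff] <;>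
    norm_num

include hmeas in
lemma cyl_meas (l : List Bool) : MeasurableSet (Cyl X l) := by
  have : Cyl X l = ⋂ i ∈ Finset.range l.length, X i ⁻¹' {pmr (l.getD i true)} := by
    ext ω
    simp [Cyl, Set.mem_iInter]
  rw [this]
  exact MeasurableSet.biInter (Finset.range l.length).countable_toSet
    fun i _ => (hmeas i) (measurableSet_singleton _)

include hmeas hdist in
lemma cyl_prob (hindep : iIndepFun X P) (l : List Bool) :
    P (Cyl X l) = w l := by
  have hset : Cyl X l = ⋂ i ∈ Finset.range l.length, X i ⁻¹' {pmr (l.getD i true)} := by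
    ext ω
    simp [Cyl, Set.mem_iInter]
  rw [hset, hindep.meas_biInter
    (fun i _ => ⟨{pmr (l.getD i true)}, measurableSet_singleton _, rfl⟩)]
  rw [Finset.prod_congr rfl (fun i _ => step_prob P X hmeas hdist i (pmr_or _))]
  simp [w]

include hmeas in
lemma G_meas : MeasurableSet (G X) := by
  have : G X = ⋂ i, X i ⁻¹' ({1, -1} : Set ℝ) := by
    ext ω
    simp [G, Set.mem_iInter]
  rw [this]
  exact MeasurableSet.iInter fun i =>
    (hmeas i) ((measurableSet_singleton (-1 : ℝ)).insert 1)

include hmeas hdist in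
lemma G_compl : P (G X)ᶜ = 0 := by
  have hsub : (G X)ᶜ ⊆ ⋃ i, X i ⁻¹' ({1, -1} : Set ℝ)ᶜ := by
    intro ω hω
    simp only [G, Set.mem_compl_iff, Set.mem_setOf_eq, not_forall] at hω
    obtain ⟨i, hi⟩ := hω
    refine Set.mem_iUnion.mpr ⟨i, ?_⟩
    simp only [Set.mem_preimage, Set.mem_compl_iff, Set.mem_insert_iff,
      Set.mem_singleton_iff]
    tauto
  refine measure_mono_null hsub (measure_iUnion_null fun i => ?_)
  rw [← Measure.map_apply (hmeas i)
    (((measurableSet_singleton (-1 : ℝ)).insert 1).compl), hdist i]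
  simp [Measure.dirac_apply' _ (((measurableSet_singleton (-1 : ℝ)).insert 1).compl)]

end meas

section path

variable (X : ℕ → Ω → ℝ) (S : ℕ → Ω → ℝ)
  (hS : ∀ m ω, S m ω = ∑ i ∈ Finset.range m, X i ω)
  (τ : Ω → ℕ) (hτ : ∀ ω, τ ω = sInf {n : ℕ | 1 ≤ n ∧ S n ω = 1})
  (N : Ω → ℕ)
  (hN : ∀ ω, N ω = ((Finset.Icc 1 (τ ω)).filter (fun j => 0 ≤ S j ω)).card)

include hS in
lemma path_S {l : List Bool} {ω : Ω} (hc : ω ∈ Cyl X l) :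
    ∀ j ≤ l.length, S j ω = ((ps l j : ℤ) : ℝ) := by
  intro j hj
  rw [hS, ps]
  push_cast
  refine Finset.sum_congr rfl fun i hi => ?_
  rw [hc i (lt_of_lt_of_le (Finset.mem_range.mp hi) hj), pmr_eq]

include hS hτ in
lemma path_tau {l : List Bool} {ω : Ω} (hFP : FP l) (hc : ω ∈ Cyl X l) :
    τ ω = l.length := by
  have hn1 : 1 ≤ l.length := length_pos_of_FP hFP
  have hSn : S l.length ω = 1 := by
    rw [path_S X S hS hc l.length le_rfl, hFP.1]
    norm_num
  have hmem : l.length ∈ {n : ℕ | 1 ≤ n ∧ S n ω = 1} := ⟨hn1, hSn⟩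
  rw [hτ]
  refine le_antisymm (Nat.sInf_le hmem) (le_csInf ⟨_, hmem⟩ ?_)
  intro m hm
  by_contra hlt
  push_neg at hlt
  have h1 : S m ω = ((ps l m : ℤ) : ℝ) := path_S X S hS hc m (by omega)
  have h2 : (ps l m : ℤ) = 1 := by
    have := hm.2
    rw [h1] at this
    exact_mod_cast this
  have h3 := hFP.2 m hlt
  omega

include hS hτ hN in
lemma path_N {l : List Bool} {ω : Ω} (hFP : FP l) (hc : ω ∈ Cyl X l) :
    N ω = cnt l := by
  rw [hN, cnt, path_tau X S hS τ hτ hFP hc]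
  congr 1
  refine Finset.filter_congr fun j hj => ?_
  rw [path_S X S hS hc j (Finset.mem_Icc.mp hj).2]
  norm_cast

include hS hτ in
lemma path_exists {ω : Ω} (hg : ω ∈ G X) (h1 : 1 ≤ τ ω) :
    ∃ l : List Bool, FP l ∧ l.length = τ ω ∧ ω ∈ Cyl X l := by
  classical
  set L : List Bool := List.ofFn (fun i : Fin (τ ω) => decide (X i.1 ω = 1)) with hL
  have hlen : L.length = τ ω := by simp [hL]
  have hcyl : ω ∈ Cyl X L := by
    intro i hi
    rw [hlen] at hi
    have hget : L.getD i true = decide (X i ω = 1) := by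
      rw [List.getD_eq_getElem _ _ (by rw [hlen]; exact hi)]
      simp [hL]
    rw [hget]
    rcases hg i with h | h
    · rw [h, decide_eq_true (by norm_num : (1:ℝ) = 1)]
      simp [pmr]
    · rw [h]
      have : decide ((-1 : ℝ) = 1) = false := decide_eq_false (by norm_num)
      rw [this]
      simp [pmr]
  have hne : {n : ℕ | 1 ≤ n ∧ S n ω = 1}.Nonempty := by
    by_contra hemp
    rw [Set.not_nonempty_iff_eq_empty] at hemp
    rw [hτ, hemp, Nat.sInf_empty] at h1
    omega
  have hτmem : τ ω ∈ {n : ℕ | 1 ≤ n ∧ S n ω = 1} := by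
    rw [hτ]
    exact Nat.sInf_mem hne
  have hpsS : ∀ j ≤ τ ω, S j ω = ((ps L j : ℤ) : ℝ) := by
    intro j hj
    exact path_S X S hS hcyl j (by omega)
  have hfinal : ps L L.length = 1 := by
    have := hτmem.2
    rw [hpsS (τ ω) le_rfl] at this
    rw [hlen]
    exact_mod_cast this
  have hmid : ∀ j, j < τ ω → ps L j ≤ 0 := by
    intro j
    induction j with
    | zero => simp
    | succ i ih =>
      intro hlt
      have hprev : ps L i ≤ 0 := ih (by omega)
      have hstep : ps L (i+1) = ps L i + pmz (L.getD i true) := ps_succ _ _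
      have hb := pmz_le_one (L.getD i true)
      have hne1 : ps L (i+1) ≠ 1 := by
        intro he
        have hS1 : S (i+1) ω = 1 := by
          rw [hpsS (i+1) (by omega), he]
          norm_num
        have hle : τ ω ≤ i + 1 := by
          rw [hτ]
          exact Nat.sInf_le ⟨by omega, hS1⟩
        omega
      omega
  exact ⟨L, ⟨hfinal, by rw [hlen]; exact hmid⟩, hlen, hcyl⟩

end path

end SSRWAux4

namespace SSRWMain
open SSRWAux SSRWAux2 SSRWAux3 SSRWAux4 MeasureTheory ProbabilityTheory

variable {Ω : Type*} [MeasurableSpace Ω] (P : Measure Ω) [IsProbabilityMeasure P]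
  (X : ℕ → Ω → ℝ)
  (hindep : iIndepFun X P)
  (hmeas : ∀ i, Measurable (X i))
  (hdist : ∀ i, Measure.map (X i) P
      = (1 / 2 : ENNReal) • Measure.dirac (1 : ℝ)
          + (1 / 2 : ENNReal) • Measure.dirac (-1 : ℝ))
  (S : ℕ → Ω → ℝ) (hS : ∀ m ω, S m ω = ∑ i ∈ Finset.range m, X i ω)
  (τ : Ω → ℕ) (hτ : ∀ ω, τ ω = sInf {n : ℕ | 1 ≤ n ∧ S n ω = 1})
  (N : Ω → ℕ)
  (hN : ∀ ω, N ω = ((Finset.Icc 1 (τ ω)).filter (fun j => 0 ≤ S j ω)).card)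

include hS hτ in
lemma cylG_disjoint {l l₂ : List Bool} (h1 : FP l) (h2 : FP l₂) (hne : l ≠ l₂) :
    Disjoint (Cyl X l ∩ G X) (Cyl X l₂ ∩ G X) := by
  rw [Set.disjoint_left]
  rintro ω ⟨hc1, _⟩ ⟨hc2, _⟩
  apply hne
  have hlen : l.length = l₂.length := by
    rw [← path_tau X S hS τ hτ h1 hc1, ← path_tau X S hS τ hτ h2 hc2]
  refine List.ext_getElem hlen fun i hi1 hi2 => ?_
  have e1 := hc1 i hi1
  have e2 := hc2 i hi2
  rw [List.getD_eq_getElem _ _ hi1] at e1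
  rw [List.getD_eq_getElem _ _ hi2] at e2
  exact pmr_inj (e1.symm.trans e2)

include hindep hmeas hdist hS hτ in
lemma union_prob {ι : Type*} [Countable ι] (f : ι → List Bool)
    (hf : ∀ x, FP (f x)) (hinj : Function.Injective f) :
    P (⋃ x, (Cyl X (f x) ∩ G X)) = ∑' x, w (f x) := by
  rw [measure_iUnion
    (fun a b hab => cylG_disjoint X S hS τ hτ (hf a) (hf b) (fun h => hab (hinj h)))
    (fun x => (cyl_meas X hmeas _).inter (G_meas X hmeas))]
  exact tsum_congr fun x => by
    rw [measure_inter_conull (G_compl P X hmeas hdist),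
      cyl_prob P X hmeas hdist hindep]

include hS hτ hN in
lemma event_N {k : ℕ} (hk : 1 ≤ k) :
    {ω | N ω = k} ∩ G X
      = ⋃ l : {l : List Bool // FP l ∧ cnt l = k}, (Cyl X l.1 ∩ G X) := by
  ext ω
  constructor
  · rintro ⟨hNk, hg⟩
    rw [Set.mem_setOf_eq] at hNk
    have h1 : 1 ≤ τ ω := by
      by_contra h0
      push_neg at h0
      have hτ0 : τ ω = 0 := by omega
      rw [hN, hτ0] at hNk
      rw [Finset.Icc_eq_empty (by omega)] at hNk
      simp at hNk
      omega
    obtain ⟨l, hFP, _, hcyl⟩ := path_exists X S hS τ hτ hg h1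
    have hcnt : cnt l = k := by
      rw [← path_N X S hS τ hτ N hN hFP hcyl, hNk]
    exact Set.mem_iUnion.mpr ⟨⟨l, hFP, hcnt⟩, hcyl, hg⟩
  · intro h
    obtain ⟨l, hcyl, hg⟩ := Set.mem_iUnion.mp h
    refine ⟨?_, hg⟩
    rw [Set.mem_setOf_eq, path_N X S hS τ hτ N hN l.2.1 hcyl]
    exact l.2.2

include hS hτ in
lemma event_tau :
    {ω | 1 ≤ τ ω} ∩ G X = ⋃ l : {l : List Bool // FP l}, (Cyl X l.1 ∩ G X) := by
  ext ω
  constructor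
  · rintro ⟨h1, hg⟩
    rw [Set.mem_setOf_eq] at h1
    obtain ⟨l, hFP, _, hcyl⟩ := path_exists X S hS τ hτ hg h1
    exact Set.mem_iUnion.mpr ⟨⟨l, hFP⟩, hcyl, hg⟩
  · intro h
    obtain ⟨l, hcyl, hg⟩ := Set.mem_iUnion.mp h
    refine ⟨?_, hg⟩
    rw [Set.mem_setOf_eq, path_tau X S hS τ hτ l.2 hcyl]
    exact length_pos_of_FP l.2

include hindep hmeas hdist hS hτ in
lemma hsum_le_one : hsum ≤ 1 := by
  have h1 : P ({ω | 1 ≤ τ ω} ∩ G X) = hsum := by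
    rw [event_tau X S hS τ hτ,
      union_prob P X hindep hmeas hdist S hS τ hτ (fun l : {l : List Bool // FP l} => l.1)
        (fun l => l.2) Subtype.val_injective]
    rfl
  rw [← h1]
  exact prob_le_one

include hindep hmeas hdist hS hτ hN in
lemma measure_N_eq {k : ℕ} (hk : 1 ≤ k) :
    P {ω | N ω = k} = (2 : ENNReal)⁻¹ ^ k := by
  have h1 : P {ω | N ω = k} = pk k := by
    rw [← measure_inter_conull (s := {ω | N ω = k}) (G_compl P X hmeas hdist),
      event_N X S hS τ hτ N hN hk,
      union_prob P X hindep hmeas hdist S hS τ hτ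
        (fun l : {l : List Bool // FP l ∧ cnt l = k} => l.1)
        (fun l => l.2.1) Subtype.val_injective]
    rfl
  rw [h1, pk_formula (hsum_eq_one (hsum_le_one P X hindep hmeas hdist S hS τ hτ)) k hk]

include hindep hmeas hdist hS hτ hN in
lemma measure_N_zero : P {ω | N ω = 0} = 0 := by
  set V := ⋃ l : {l : List Bool // FP l}, (Cyl X l.1 ∩ G X) with hV
  have hVmeas : MeasurableSet V :=
    MeasurableSet.iUnion fun l => (cyl_meas X hmeas _).inter (G_meas X hmeas)
  have hVprob : P V = 1 := by
    rw [hV, union_prob P X hindep hmeas hdist S hS τ hτ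
      (fun l : {l : List Bool // FP l} => l.1) (fun l => l.2) Subtype.val_injective]
    exact hsum_eq_one (hsum_le_one P X hindep hmeas hdist S hS τ hτ)
  have hsub : {ω | N ω = 0} ⊆ Vᶜ := by
    intro ω hω
    rw [Set.mem_setOf_eq] at hω
    intro hmem
    obtain ⟨l, hcyl, hg⟩ := Set.mem_iUnion.mp hmem
    have := path_N X S hS τ hτ N hN l.2 hcyl
    have := cnt_pos l.2
    omega
  refine measure_mono_null hsub ?_
  rw [measure_compl hVmeas (measure_ne_top P V), hVprob, measure_univ, tsub_self]

end SSRWMain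

namespace SSRWMain2
open SSRWAux SSRWAux2 SSRWAux3 SSRWAux4 SSRWMain MeasureTheory ProbabilityTheory

variable {Ω : Type*} [MeasurableSpace Ω]
  (X : ℕ → Ω → ℝ)
  (hmeas : ∀ i, Measurable (X i))
  (S : ℕ → Ω → ℝ) (hS : ∀ m ω, S m ω = ∑ i ∈ Finset.range m, X i ω)
  (τ : Ω → ℕ) (hτ : ∀ ω, τ ω = sInf {n : ℕ | 1 ≤ n ∧ S n ω = 1})
  (N : Ω → ℕ)
  (hN : ∀ ω, N ω = ((Finset.Icc 1 (τ ω)).filter (fun j => 0 ≤ S j ω)).card)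

include hmeas hS in
lemma S_meas (j : ℕ) : Measurable (S j) := by
  have : S j = fun ω => ∑ i ∈ Finset.range j, X i ω := funext fun ω => hS j ω
  rw [this]
  exact Finset.measurable_sum _ fun i _ => hmeas i

include hmeas hS in
lemma memA_meas (m : ℕ) : MeasurableSet {ω | 1 ≤ m ∧ S m ω = 1} := by
  have : {ω | 1 ≤ m ∧ S m ω = 1} = {ω | 1 ≤ m} ∩ S m ⁻¹' {1} := rfl
  rw [this]
  exact (MeasurableSet.const _).inter ((S_meas X hmeas S hS m) (measurableSet_singleton 1))

include hmeas hS hτ in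
lemma tau_meas : Measurable τ := by
  apply measurable_to_countable'
  intro n
  match n with
  | 0 =>
    have hset : τ ⁻¹' {0} = ⋂ m, {ω | 1 ≤ m ∧ S m ω = 1}ᶜ := by
      ext ω
      simp only [Set.mem_preimage, Set.mem_singleton_iff, Set.mem_iInter,
        Set.mem_compl_iff, Set.mem_setOf_eq]
      rw [hτ]
      constructor
      · intro h0 m hm
        have hne : {n : ℕ | 1 ≤ n ∧ S n ω = 1}.Nonempty := ⟨m, hm⟩
        have := Nat.sInf_mem hne
        rw [h0] at this
        exact absurd this.1 (by omega)
      · intro h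
        have : {n : ℕ | 1 ≤ n ∧ S n ω = 1} = ∅ := by
          ext m; simp only [Set.mem_setOf_eq, Set.mem_empty_iff_false, iff_false]
          exact h m
        rw [this, Nat.sInf_empty]
    rw [hset]
    exact MeasurableSet.iInter fun m => (memA_meas X hmeas S hS m).compl
  | Nat.succ n =>
    have hset : τ ⁻¹' {n+1}
        = {ω | 1 ≤ n+1 ∧ S (n+1) ω = 1}
          ∩ ⋂ m ∈ Finset.range (n+1), {ω | 1 ≤ m ∧ S m ω = 1}ᶜ := by
      ext ω
      simp only [Set.mem_preimage, Set.mem_singleton_iff, Set.mem_inter_iff,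
        Set.mem_iInter, Set.mem_compl_iff, Set.mem_setOf_eq, Finset.mem_range]
      rw [hτ]
      constructor
      · intro h0
        have hne : {j : ℕ | 1 ≤ j ∧ S j ω = 1}.Nonempty := by
          by_contra hemp
          rw [Set.not_nonempty_iff_eq_empty] at hemp
          rw [hemp, Nat.sInf_empty] at h0
          omega
        have hmem := Nat.sInf_mem hne
        rw [h0] at hmem
        refine ⟨hmem, fun m hm hcon => ?_⟩
        have := Nat.sInf_le (show m ∈ {j : ℕ | 1 ≤ j ∧ S j ω = 1} from hcon)
        omega
      · rintro ⟨hmem, hbelow⟩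
        refine le_antisymm (Nat.sInf_le hmem) (le_csInf ⟨_, hmem⟩ fun b hb => ?_)
        by_contra hlt
        push_neg at hlt
        exact hbelow b hlt hb
    rw [hset]
    exact (memA_meas X hmeas S hS (n+1)).inter
      (MeasurableSet.biInter (Finset.range (n+1)).countable_toSet
        fun m _ => (memA_meas X hmeas S hS m).compl)

include hmeas hS hτ hN in
lemma N_meas : Measurable N := by
  have hcard : ∀ n : ℕ, Measurable
      (fun ω => ((Finset.Icc 1 n).filter (fun j => 0 ≤ S j ω)).card) := by
    intro n
    have : (fun ω => ((Finset.Icc 1 n).filter (fun j => 0 ≤ S j ω)).card)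
        = fun ω => ∑ j ∈ Finset.Icc 1 n, if 0 ≤ S j ω then 1 else 0 := by
      funext ω
      rw [Finset.card_filter]
    rw [this]
    exact Finset.measurable_sum _ fun j _ =>
      Measurable.ite (measurableSet_le measurable_const (S_meas X hmeas S hS j))
        measurable_const measurable_const
  apply measurable_to_countable'
  intro k
  have hset : N ⁻¹' {k} = ⋃ n, (τ ⁻¹' {n}
      ∩ {ω | ((Finset.Icc 1 n).filter (fun j => 0 ≤ S j ω)).card = k}) := by
    ext ω
    simp only [Set.mem_preimage, Set.mem_singleton_iff, Set.mem_iUnion,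
      Set.mem_inter_iff, Set.mem_setOf_eq]
    constructor
    · intro h
      exact ⟨τ ω, rfl, by rw [← hN]; exact h⟩
    · rintro ⟨n, hn, hc⟩
      rw [hN, hn]
      exact hc
  rw [hset]
  exact MeasurableSet.iUnion fun n =>
    ((tau_meas X hmeas S hS τ hτ) (measurableSet_singleton n)).inter
      ((hcard n) (measurableSet_singleton k))

end SSRWMain2

open MeasureTheory ProbabilityTheory

/-- For the simple symmetric random walk with first hitting time `τ₁` of level 1,
the number `N` of non-negative steps up to `τ₁` is geometric: `P(N = k) = 2^{-k}` for `k ≥ 1`,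
with generating function `E[z^N] = z/(2-z)` for `|z| ≤ 1`. -/
theorem ssrw_nonneg_steps_before_hitting_one
    {Ω : Type*} [MeasurableSpace Ω] (P : Measure Ω) [IsProbabilityMeasure P]
    (X : ℕ → Ω → ℝ)
    (hindep : iIndepFun X P)
    (hmeas : ∀ i, Measurable (X i))
    (hdist : ∀ i, Measure.map (X i) P
      = (1 / 2 : ENNReal) • Measure.dirac (1 : ℝ)
          + (1 / 2 : ENNReal) • Measure.dirac (-1 : ℝ))
    (S : ℕ → Ω → ℝ) (hS : ∀ m ω, S m ω = ∑ i ∈ Finset.range m, X i ω)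
    (τ : Ω → ℕ) (hτ : ∀ ω, τ ω = sInf {n : ℕ | 1 ≤ n ∧ S n ω = 1})
    (N : Ω → ℕ)
    (hN : ∀ ω, N ω = ((Finset.Icc 1 (τ ω)).filter (fun j => 0 ≤ S j ω)).card) :
    (∀ k : ℕ, 1 ≤ k → P {ω | N ω = k} = (2 : ENNReal) ^ (-(k : ℤ)))
      ∧ (∀ z : ℝ, |z| ≤ 1 → ∫ ω, z ^ N ω ∂P = z / (2 - z)) := by
  have key : ∀ k : ℕ, 1 ≤ k → P {ω | N ω = k} = (2 : ENNReal)⁻¹ ^ k :=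
    fun k hk => SSRWMain.measure_N_eq P X hindep hmeas hdist S hS τ hτ N hN hk
  constructor
  · intro k hk
    rw [key k hk, ENNReal.zpow_neg, zpow_natCast,
      ← ENNReal.inv_pow]
  · intro z hz
    have hNmeas := SSRWMain2.N_meas X hmeas S hS τ hτ N hN
    have hP0 := SSRWMain.measure_N_zero P X hindep hmeas hdist S hS τ hτ N hN
    set μN := Measure.map N P with hμN
    have hprob : IsProbabilityMeasure μN := Measure.isProbabilityMeasure_map hNmeas.aemeasurable
    have hgmeas : Measurable fun n : ℕ => z ^ n := measurable_from_nat
    have hint : Integrable (fun n : ℕ => z ^ n) μN := by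
      refine Integrable.mono' (integrable_const 1) hgmeas.aestronglyMeasurable
        (ae_of_all _ fun n => ?_)
      rw [norm_pow]
      calc ‖z‖ ^ n ≤ 1 ^ n :=
            pow_le_pow_left₀ (norm_nonneg z) (by rwa [Real.norm_eq_abs]) n
        _ = 1 := one_pow n
    have hmap : ∫ ω, z ^ N ω ∂P = ∫ n, z ^ n ∂μN :=
      (integral_map hNmeas.aemeasurable hgmeas.aestronglyMeasurable).symm
    rw [hmap, integral_countable' hint]
    have hz2 : ‖z / 2‖ < 1 := by
      rw [Real.norm_eq_abs, abs_div, abs_two]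
      have := abs_nonneg z
      linarith
    have hgeo := hasSum_geometric_of_norm_lt_one hz2
    have hone : HasSum (fun n : ℕ => if n = 0 then (1:ℝ) else 0) 1 := hasSum_ite_eq 0 1
    have hsub := hgeo.sub hone
    have hfun : (fun n : ℕ => (μN {n}).toReal • z ^ n)
        = fun n => (z/2)^n - (if n = 0 then 1 else 0) := by
      funext n
      have hμn : μN {n} = P {ω | N ω = n} := by
        rw [hμN, Measure.map_apply hNmeas (measurableSet_singleton n)]
        rfl
      match n with
      | 0 =>
        rw [hμn, hP0]
        simp
      | Nat.succ k =>
        rw [hμn, key (k+1) (by omega), if_neg (by omega)]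
        rw [ENNReal.toReal_pow, ENNReal.toReal_inv]
        simp only [ENNReal.toReal_ofNat, smul_eq_mul, sub_zero, div_pow]
        rw [div_eq_mul_inv, ← inv_pow, pow_succ]
        ring
    rw [show (fun n : ℕ => μN.real {n} • z ^ n) = fun n => (μN {n}).toReal • z ^ n from rfl,
      hfun, hsub.tsum_eq]
    have hzle := abs_le.mp hz
    have h2z : (2:ℝ) - z ≠ 0 := by intro h; linarith [hzle.2]
    have h1z : (1:ℝ) - z / 2 ≠ 0 := by intro h; apply h2z; linarith
    field_simp
    ring
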